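/- arXiv:1812.10058 — 5 statements merged into one kernel-verified Lean document; each statement's English description precedes it below -/
import Mathlib

section
/- Let A = {a_1,...,a_n} be a point configuration in ℚ^d affinely spanning ℚ^d, and G = {g_1,...,g_n} its Gale transform. For a subset I ⊆ {1,...,n}, the points {a_i : i ∈ I} lie in a common face of the convex hull conv(A) if and only if 0 ∈ conv{g_j : j ∉ I}. -/
/-- A vector configuration is *positively 2-spanning* if for every linear hyperplane
(kernel of a nonzero linear functional), each of the two open halfspaces contains at
least 2 vectors of the configuration (counted with multiplicity, i.e. indices). -/
def Pos2Span {ι V : Type*} [AddCommGroup V] [Module ℚ V] (w : ι → V) : Prop :=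
  ∀ f : V →ₗ[ℚ] ℚ, f ≠ 0 →
    (∃ i j : ι, i ≠ j ∧ 0 < f (w i) ∧ 0 < f (w j)) ∧
    (∃ i j : ι, i ≠ j ∧ f (w i) < 0 ∧ f (w j) < 0)

/-- `g` is a Gale transform of the point configuration `a`: the rows of the matrix `B`
(whose columns are the `g i`) are linearly independent, there are `n - d - 1` of them,
and they are orthogonal to the rows of the matrix `Ã` whose columns are `(a i, 1)`. -/
def IsGale {n d m : ℕ} (a : Fin n → Fin d → ℚ) (g : Fin n → Fin m → ℚ) : Prop :=
  m + (d + 1) = n ∧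
  LinearIndependent ℚ (fun k : Fin m => fun i : Fin n => g i k) ∧
  (∀ k : Fin m, ∑ i, g i k = 0) ∧
  (∀ k : Fin m, ∀ j : Fin d, ∑ i, a i j * g i k = 0)

open Finset

/-- The affine map `x ↦ ∑ j, c j * x j + b` on `Fin d → ℚ`. -/
noncomputable def galeAff {d : ℕ} (c : Fin d → ℚ) (b : ℚ) : (Fin d → ℚ) →ᵃ[ℚ] ℚ where
  toFun := fun x => (∑ j, c j * x j) + b
  linear :=
    { toFun := fun x => ∑ j, c j * x j
      map_add' := by intro x y; simp [mul_add, Finset.sum_add_distrib]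
      map_smul' := by intro r x; simp [Finset.mul_sum]; exact Finset.sum_congr rfl fun i _ => by ring }
  map_vadd' := by
    intro p v
    simp only [vadd_eq_add, LinearMap.coe_mk, AddHom.coe_mk, Pi.add_apply, mul_add,
      Finset.sum_add_distrib]
    ring

lemma galeAff_apply {d : ℕ} (c : Fin d → ℚ) (b : ℚ) (x : Fin d → ℚ) :
    galeAff c b x = (∑ j, c j * x j) + b := rfl

section Main

variable {n d m : ℕ} (a : Fin n → Fin d → ℚ) (g : Fin n → Fin m → ℚ)

/-- The row-space generators of `Ã`: the `d` coordinate rows and the all-ones row. -/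
noncomputable def galeRows (a : Fin n → Fin d → ℚ) : Fin d ⊕ Unit → (Fin n → ℚ) :=
  Sum.elim (fun j i => a i j) (fun _ _ => (1 : ℚ))

lemma galeRows_indep (hn : 0 < n) (hspan : affineSpan ℚ (Set.range a) = ⊤) :
    LinearIndependent ℚ (galeRows a) := by
  rw [Fintype.linearIndependent_iff]
  intro c hc
  have hc' : ∀ i : Fin n, (∑ j, c (Sum.inl j) * a i j) + c (Sum.inr ()) = 0 := by
    intro i
    have := congrFun hc i
    simpa [galeRows, Fintype.sum_sum_type, Finset.sum_apply] using this
  -- the linear functional x ↦ ∑ j, c (inl j) * x j vanishes on differences of the a i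
  set L : (Fin d → ℚ) →ₗ[ℚ] ℚ := (galeAff (fun j => c (Sum.inl j)) 0).linear with hL
  have hLa : ∀ i, L (a i) = - c (Sum.inr ()) := by
    intro i
    have : L (a i) = ∑ j, c (Sum.inl j) * a i j := rfl
    rw [this]; linarith [hc' i]
  have hvs : vectorSpan ℚ (Set.range a) = ⊤ :=
    AffineSubspace.vectorSpan_eq_top_of_affineSpan_eq_top ℚ _ _ hspan
  have hLzero : ∀ x, L x = 0 := by
    have hle : vectorSpan ℚ (Set.range a) ≤ LinearMap.ker L := by
      rw [vectorSpan_def, Submodule.span_le]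
      rintro v ⟨x, ⟨i, rfl⟩, y, ⟨i', rfl⟩, rfl⟩
      simp only [SetLike.mem_coe, LinearMap.mem_ker, vsub_eq_sub, map_sub]
      rw [hLa i, hLa i']; ring
    intro x
    have : x ∈ LinearMap.ker L := hle (hvs ▸ Submodule.mem_top)
    exact this
  have hcl : ∀ j, c (Sum.inl j) = 0 := by
    intro j
    have := hLzero (Pi.single j 1)
    simpa [hL, galeAff, Pi.single_apply, mul_ite] using this
  intro s
  rcases s with j | u
  · exact hcl j
  · have := hc' ⟨0, hn⟩
    rcases u with ⟨⟩
    simp only [hcl, zero_mul, Finset.sum_const_zero, zero_add] at this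
    exact this

end Main

section Ker

variable {n d m : ℕ}

lemma gale_span_eq_ker (a : Fin n → Fin d → ℚ) (g : Fin n → Fin m → ℚ)
    (hmn : m + (d + 1) = n)
    (hli : LinearIndependent ℚ (fun k : Fin m => fun i : Fin n => g i k))
    (hsum : ∀ k : Fin m, ∑ i, g i k = 0)
    (horth : ∀ k : Fin m, ∀ j : Fin d, ∑ i, a i j * g i k = 0)
    (hspan : affineSpan ℚ (Set.range a) = ⊤) :
    Submodule.span ℚ (Set.range (galeRows a)) =
      LinearMap.ker (Matrix.mulVecLin (Matrix.of fun k i => g i k)) := by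
  set B : Matrix (Fin m) (Fin n) ℚ := Matrix.of fun k i => g i k with hB
  have hn : 0 < n := by omega
  -- rank of B is m
  have hrank : B.rank = m := by
    have : LinearIndependent ℚ B := hli
    rw [this.rank_matrix, Fintype.card_fin]
  -- range of mulVecLin is everything
  have hrange : LinearMap.range B.mulVecLin = ⊤ := by
    apply Submodule.eq_top_of_finrank_eq
    rw [show Module.finrank ℚ (LinearMap.range B.mulVecLin) = B.rank from rfl, hrank,
      Module.finrank_fin_fun]
  -- dimension of the kernel
  have hkerdim : Module.finrank ℚ (LinearMap.ker B.mulVecLin) = d + 1 := by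
    have h1 := LinearMap.finrank_range_add_finrank_ker B.mulVecLin
    rw [hrange] at h1
    simp only [finrank_top, Module.finrank_fin_fun] at h1
    omega
  -- the rows lie in the kernel
  have hle : Submodule.span ℚ (Set.range (galeRows a)) ≤ LinearMap.ker B.mulVecLin := by
    rw [Submodule.span_le]
    rintro v ⟨s, rfl⟩
    simp only [SetLike.mem_coe, LinearMap.mem_ker]
    funext k
    rcases s with j | u
    · have : (B.mulVecLin (galeRows a (Sum.inl j))) k = ∑ i, a i j * g i k := by
        simp [galeRows, Matrix.mulVecLin, Matrix.mulVec, dotProduct, hB, mul_comm]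
      rw [this, horth k j]; rfl
    · have : (B.mulVecLin (galeRows a (Sum.inr u))) k = ∑ i, g i k := by
        simp [galeRows, Matrix.mulVecLin, Matrix.mulVec, dotProduct, hB]
      rw [this, hsum k]; rfl
  -- dimensions match
  have hdim : Module.finrank ℚ (Submodule.span ℚ (Set.range (galeRows a))) = d + 1 := by
    rw [finrank_span_eq_card (galeRows_indep a hn hspan)]
    simp
  exact Submodule.eq_of_le_of_finrank_le hle (by rw [hkerdim, hdim])

end Ker

/-- The points `{a i : i ∈ I}` lie in a common (proper) face of `conv(A)` — the zero
set of an affine function nonnegative on the configuration and positive somewhere —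
iff `0` lies in the convex hull of `{g j : j ∉ I}`. -/
theorem stmt3 {n d m : ℕ} (a : Fin n → Fin d → ℚ) (g : Fin n → Fin m → ℚ)
    (hGale : IsGale a g) (hspan : affineSpan ℚ (Set.range a) = ⊤) (I : Set (Fin n)) :
    (∃ f : (Fin d → ℚ) →ᵃ[ℚ] ℚ, (∀ i, 0 ≤ f (a i)) ∧ (∃ i, 0 < f (a i)) ∧
      ∀ i ∈ I, f (a i) = 0) ↔
    (0 : Fin m → ℚ) ∈ convexHull ℚ (g '' {j | j ∉ I}) := by
  classical
  obtain ⟨hmn, hli, hsum, horth⟩ := hGale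
  have hn : 0 < n := by omega
  constructor
  · rintro ⟨f, hf0, ⟨i0, hi0⟩, hfI⟩
    set t : Fin n → ℚ := fun i => f (a i) with ht_def
    -- key orthogonality : ∑ i, t i * g i k = 0
    have ht : ∀ k, ∑ i, t i * g i k = 0 := by
      intro k
      set c : Fin d → ℚ := fun j => f.linear (fun j' => if j = j' then 1 else 0) with hc
      have hdecomp : ∀ i, t i = (∑ j, a i j * c j) + f 0 := by
        intro i
        have h1 : f (a i) = f.linear (a i) + f 0 := by
          have := congrFun (AffineMap.decomp f) (a i)
          simpa only [Pi.add_apply] using this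
        have h2 : f.linear (a i) = ∑ j, a i j • f.linear (fun j' => if j = j' then 1 else 0) :=
          LinearMap.pi_apply_eq_sum_univ f.linear (a i)
        show f (a i) = _
        rw [h1, h2]
        simp [hc, smul_eq_mul]
      calc ∑ i, t i * g i k
          = ∑ i, ((∑ j, c j * (a i j * g i k)) + f 0 * g i k) := by
            refine Finset.sum_congr rfl fun i _ => ?_
            rw [hdecomp i, add_mul, Finset.sum_mul]
            congr 1
            exact Finset.sum_congr rfl fun j _ => by ring
        _ = (∑ i, ∑ j, c j * (a i j * g i k)) + ∑ i, f 0 * g i k := Finset.sum_add_distrib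
        _ = (∑ j, c j * ∑ i, a i j * g i k) + f 0 * ∑ i, g i k := by
            rw [Finset.sum_comm]
            simp_rw [Finset.mul_sum]
        _ = 0 := by simp [hsum k, horth k]
    -- now build the convex combination
    set s : Finset (Fin n) := Finset.univ.filter (fun i => i ∉ I) with hs
    have hts : ∑ i ∈ s, t i = ∑ i, t i := by
      apply Finset.sum_filter_of_ne
      intro i _ hti hiI
      exact hti (hfI i hiI)
    have hpos : 0 < ∑ i ∈ s, t i := by
      rw [hts]
      exact Finset.sum_pos' (fun i _ => hf0 i) ⟨i0, Finset.mem_univ i0, hi0⟩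
    have hcm : s.centerMass t g = 0 := by
      rw [Finset.centerMass]
      have hz : ∑ i ∈ s, t i • g i = 0 := by
        have : ∑ i ∈ s, t i • g i = ∑ i, t i • g i := by
          apply Finset.sum_filter_of_ne
          intro i _ hti hiI
          exact hti (by show f (a i) • g i = 0; rw [hfI i hiI, zero_smul])
        rw [this]
        funext k
        have := ht k
        simpa [Finset.sum_apply, smul_eq_mul] using this
      rw [hz, smul_zero]
    rw [← hcm]
    exact Finset.centerMass_mem_convexHull s (fun i _ => hf0 i) hpos
      (fun i hi => ⟨i, by simpa [hs] using hi, rfl⟩)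
  · intro h0
    rw [_root_.convexHull_eq] at h0
    obtain ⟨ι, tt, w, z, hw0, hw1, hz, hcm⟩ := h0
    -- choose preimages in the complement of I
    have hjex : ∀ i ∈ tt, ∃ p : Fin n, p ∉ I ∧ g p = z i := by
      intro i hi
      obtain ⟨p, hp, hgp⟩ := hz i hi
      exact ⟨p, hp, hgp⟩
    set jj : ι → Fin n := fun i =>
      if h : ∃ p : Fin n, p ∉ I ∧ g p = z i then h.choose else ⟨0, hn⟩ with hjj
    have hjspec : ∀ i ∈ tt, jj i ∉ I ∧ g (jj i) = z i := by
      intro i hi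
      have h := hjex i hi
      simp only [hjj, dif_pos h]
      exact h.choose_spec
    set lam : Fin n → ℚ := fun p => ∑ i ∈ tt.filter (fun i => jj i = p), w i with hlam
    have hlam0 : ∀ p, 0 ≤ lam p :=
      fun p => Finset.sum_nonneg fun i hi => hw0 i (Finset.mem_of_mem_filter i hi)
    have hlamI : ∀ p ∈ I, lam p = 0 := by
      intro p hp
      apply Finset.sum_eq_zero
      intro i hi
      exfalso
      rw [Finset.mem_filter] at hi
      exact (hjspec i hi.1).1 (hi.2 ▸ hp)
    have hlamsum : ∑ p, lam p = 1 := by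
      rw [hlam, Finset.sum_fiberwise_of_maps_to (fun i _ => Finset.mem_univ (jj i)) w, hw1]
    have hlamg : ∑ p, lam p • g p = 0 := by
      have h1 : ∑ p, lam p • g p = ∑ i ∈ tt, w i • z i := by
        simp_rw [hlam, Finset.sum_smul]
        rw [← Finset.sum_fiberwise_of_maps_to (fun i _ => Finset.mem_univ (jj i))
          (fun i => w i • z i)]
        refine Finset.sum_congr rfl fun p _ => Finset.sum_congr rfl fun i hi => ?_
        rw [Finset.mem_filter] at hi
        rw [← (hjspec i hi.1).2, hi.2]
      rw [h1]
      have : tt.centerMass w z = ∑ i ∈ tt, w i • z i := by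
        rw [Finset.centerMass, hw1, inv_one, one_smul]
      rw [← this, hcm]
    -- lam is in the kernel, hence in the row space
    have hker : lam ∈ LinearMap.ker (Matrix.mulVecLin (Matrix.of fun k i => g i k)) := by
      rw [LinearMap.mem_ker]
      funext k
      have := congrFun hlamg k
      simp only [Finset.sum_apply, Pi.smul_apply, smul_eq_mul, Pi.zero_apply] at this
      simpa [Matrix.mulVecLin, Matrix.mulVec, dotProduct, mul_comm] using this
    rw [← gale_span_eq_ker a g hmn hli hsum horth hspan] at hker
    rw [Submodule.mem_span_range_iff_exists_fun] at hker
    obtain ⟨c, hc⟩ := hker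
    have hlam_eq : ∀ i, lam i = (∑ j, c (Sum.inl j) * a i j) + c (Sum.inr ()) := by
      intro i
      have := congrFun hc i
      simp only [Fintype.sum_sum_type, Finset.sum_apply, Pi.smul_apply, smul_eq_mul,
        Finset.univ_unique, Finset.sum_singleton] at this
      rw [← this]
      simp [galeRows]
    refine ⟨galeAff (fun j => c (Sum.inl j)) (c (Sum.inr ())), ?_, ?_, ?_⟩
    · intro i
      rw [galeAff_apply, ← hlam_eq i]
      exact hlam0 i
    · by_contra hno
      push_neg at hno
      have hle : ∀ i, lam i ≤ 0 := by
        intro i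
        have := hno i
        rwa [galeAff_apply, ← hlam_eq i] at this
      have : ∑ p, lam p ≤ 0 := Finset.sum_nonpos fun p _ => hle p
      rw [hlamsum] at this
      linarith
    · intro i hi
      rw [galeAff_apply, ← hlam_eq i]
      exact hlamI i hi
end

section
/- A vector configuration g_1,...,g_n spanning ℚ^d is positively 2-spanning if and only if the Gale dual point configuration a_1,...,a_n in ℚ^(n-d-1) is the vertex set (without repetitions) of a convex polytope, i.e., no a_j lies in the convex hull of the other points. -/
open Finset Module

/-- The linear functional `x ↦ ∑ j, c j * x j`. -/
private def dotL {m : ℕ} (c : Fin m → ℚ) : (Fin m → ℚ) →ₗ[ℚ] ℚ :=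
  ∑ j, c j • LinearMap.proj j

private lemma dotL_apply {m : ℕ} (c x : Fin m → ℚ) : dotL c x = ∑ j, c j * x j := by
  simp [dotL, smul_eq_mul]

private lemma dotL_single {m : ℕ} (c : Fin m → ℚ) (k : Fin m) :
    dotL c (Pi.single k 1) = c k := by
  rw [dotL_apply]
  simp [Pi.single_apply]

private lemma funct_repr {m : ℕ} (f : (Fin m → ℚ) →ₗ[ℚ] ℚ) :
    f = dotL (fun k => f (Pi.single k 1)) := by
  apply (Pi.basisFun ℚ (Fin m)).ext
  intro k
  simp only [Pi.basisFun_apply, dotL_single]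

/-- Membership of `a j` in the convex hull of the other points, in terms of weights. -/
private lemma hull_iff {n m : ℕ} (a : Fin n → Fin m → ℚ) (j : Fin n) :
    a j ∈ convexHull ℚ (a '' {i | i ≠ j}) ↔
    ∃ w : Fin n → ℚ, (∀ i, 0 ≤ w i) ∧ w j = 0 ∧ ∑ i, w i = 1 ∧ ∑ i, w i • a i = a j := by
  classical
  constructor
  · intro h
    rw [mem_convexHull_iff_exists_fintype] at h
    obtain ⟨ι, _, w, z, hw0, hw1, hz, hx⟩ := h
    choose σ hσj hσa using fun i => (hz i : z i ∈ a '' {i | i ≠ j})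
    refine ⟨fun i0 => ∑ i ∈ univ.filter (fun i => σ i = i0), w i, ?_, ?_, ?_, ?_⟩
    · intro i0; exact Finset.sum_nonneg fun i _ => hw0 i
    · refine Finset.sum_eq_zero ?_
      intro i hi
      exact absurd ((Finset.mem_filter.mp hi).2) (hσj i)
    · rw [Finset.sum_fiberwise univ σ w, hw1]
    · have hrw : ∀ i0 : Fin n,
          (∑ i ∈ univ.filter (fun i => σ i = i0), w i) • a i0
          = ∑ i ∈ univ.filter (fun i => σ i = i0), w i • z i := by
        intro i0
        rw [Finset.sum_smul]
        refine Finset.sum_congr rfl ?_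
        intro i hi
        rw [← (Finset.mem_filter.mp hi).2, hσa i]
      calc (∑ i0, (∑ i ∈ univ.filter (fun i => σ i = i0), w i) • a i0)
          = ∑ i0, ∑ i ∈ univ.filter (fun i => σ i = i0), w i • z i :=
            Finset.sum_congr rfl fun i0 _ => hrw i0
        _ = ∑ i, w i • z i := Finset.sum_fiberwise univ σ (fun i => w i • z i)
        _ = a j := hx
  · rintro ⟨w, hw0, hwj, hw1, hwa⟩
    refine mem_convexHull_of_exists_fintype (ι := {i : Fin n // i ≠ j})
      (fun i => w i.1) (fun i => a i.1) (fun i => hw0 i.1) ?_ (fun i => ⟨i.1, i.2, rfl⟩) ?_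
    · rw [← Finset.sum_subtype (univ.erase j) (by simp) w]
      rw [Finset.sum_erase _ (by rw [hwj]), hw1]
    · rw [← Finset.sum_subtype (univ.erase j) (by simp) (fun i => w i • a i)]
      rw [Finset.sum_erase _ (by rw [hwj, zero_smul]), hwa]

/-- Key combinatorial lemma: an affine dependence among the points of a configuration
with no point in the hull of the others must have at least two negative coefficients. -/
private lemma key_neg {n m : ℕ} (a : Fin n → Fin m → ℚ)
    (hV : ∀ j, a j ∉ convexHull ℚ (a '' {i | i ≠ j}))
    (v : Fin n → ℚ) (hs : ∑ i, v i = 0) (ho : ∀ j', ∑ i, v i * a i j' = 0)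
    (hvne : v ≠ 0) : ∃ i i', i ≠ i' ∧ v i < 0 ∧ v i' < 0 := by
  classical
  by_contra hcon
  push_neg at hcon
  -- hcon : ∀ i i', i ≠ i' → v i < 0 → 0 ≤ v i'
  by_cases hneg : ∃ j, v j < 0
  · obtain ⟨j, hj⟩ := hneg
    have hnn : ∀ i, i ≠ j → 0 ≤ v i := fun i hi => hcon j i (Ne.symm hi) hj
    set t : ℚ := -v j with ht
    have ht0 : 0 < t := by simp [ht]; linarith
    have hsum' : ∑ i, (if i = j then 0 else v i) = t := by
      calc ∑ i, (if i = j then 0 else v i)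
          = ∑ i, (v i - (if i = j then v i else 0)) := by
            refine Finset.sum_congr rfl ?_
            intro i _
            by_cases h : i = j <;> simp [h]
        _ = (∑ i, v i) - ∑ i, (if i = j then v i else 0) := Finset.sum_sub_distrib _ _
        _ = t := by rw [hs, Finset.sum_ite_eq' univ j v]; simp [ht]
    apply hV j
    rw [hull_iff]
    refine ⟨fun i => (if i = j then 0 else v i) / t, ?_, ?_, ?_, ?_⟩
    · intro i
      by_cases h : i = j
      · simp [h]
      · exact div_nonneg (by simp [h]; exact hnn i h) ht0.le
    · simp
    · rw [← Finset.sum_div, hsum', div_self ht0.ne']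
    · have hva : ∑ i, v i • a i = 0 := by
        funext j'
        rw [Finset.sum_apply]
        simpa [smul_eq_mul] using ho j'
      have : ∑ i, ((if i = j then 0 else v i) / t) • a i
          = t⁻¹ • ∑ i, (if i = j then 0 else v i) • a i := by
        rw [Finset.smul_sum]
        refine Finset.sum_congr rfl ?_
        intro i _
        rw [div_eq_inv_mul, smul_smul]
      rw [this]
      have h2 : ∑ i, (if i = j then 0 else v i) • a i = (∑ i, v i • a i) - v j • a j := by
        calc ∑ i, (if i = j then 0 else v i) • a i
            = ∑ i, (v i • a i - (if i = j then v i • a i else 0)) := by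
              refine Finset.sum_congr rfl ?_
              intro i _
              by_cases h : i = j <;> simp [h]
          _ = (∑ i, v i • a i) - ∑ i, (if i = j then v i • a i else 0) :=
              Finset.sum_sub_distrib _ _
          _ = _ := by rw [Finset.sum_ite_eq' univ j (fun i => v i • a i)]; simp
      rw [h2, hva, zero_sub, ← neg_smul, ← ht, smul_smul, inv_mul_cancel₀ ht0.ne', one_smul]
  · -- no negative coefficient: all are zero, contradiction
    push_neg at hneg
    apply hvne
    funext i
    have := (Finset.sum_eq_zero_iff_of_nonneg (fun i _ => hneg i)).mp hs i (Finset.mem_univ i)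
    simpa using this

/-- A spanning vector configuration `g` (with zero sum, as part of Gale duality) is
positively 2-spanning iff the Gale dual point configuration `a` is the vertex set,
without repetitions, of a convex polytope: no `a j` lies in the convex hull of the
other points. -/
theorem stmt4 {n d m : ℕ} (g : Fin n → Fin d → ℚ) (a : Fin n → Fin m → ℚ)
    (hGale : IsGale a g) (hspan : Submodule.span ℚ (Set.range g) = ⊤)
    (haff : affineSpan ℚ (Set.range a) = ⊤) :
    Pos2Span g ↔ ∀ j, a j ∉ convexHull ℚ (a '' {i | i ≠ j}) := by
  classical
  obtain ⟨hdim, hli, hsum, horth⟩ := hGale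
  constructor
  · -- Pos2Span → vertex condition; uses ker T = row space of B
    -- the matrix Ã and the map T
    set Amat : Matrix (Fin (m+1)) (Fin n) ℚ :=
      Matrix.of (Fin.cons (fun _ => (1:ℚ)) (fun j i => a i j)) with hAmat
    set T := Amat.mulVecLin with hT
    have hTapply : ∀ (v : Fin n → ℚ) (k), T v k = ∑ i, Amat k i * v i := by
      intro v k
      simp [hT, Matrix.mulVecLin_apply, Matrix.mulVec, dotProduct]
    set r : Fin d → (Fin n → ℚ) := fun k => fun i => g i k with hr
    have hker : ∀ v : Fin n → ℚ,
        v ∈ LinearMap.ker T ↔ ((∑ i, v i = 0) ∧ ∀ j', ∑ i, v i * a i j' = 0) := by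
      intro v
      rw [LinearMap.mem_ker]
      constructor
      · intro h
        refine ⟨?_, ?_⟩
        · have := congrFun h 0
          rw [hTapply] at this
          simpa [hAmat] using this
        · intro j'
          have := congrFun h (Fin.succ j')
          rw [hTapply] at this
          simpa [hAmat, mul_comm] using this
      · rintro ⟨h1, h2⟩
        funext k
        rw [hTapply]
        refine Fin.cases ?_ ?_ k
        · simpa [hAmat] using h1
        · intro j'
          simpa [hAmat, mul_comm] using h2 j'
    have hrow : ∀ k, r k ∈ LinearMap.ker T := by
      intro k
      rw [hker]
      exact ⟨hsum k, fun j' => by simpa [hr, mul_comm] using horth k j'⟩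
    -- rows of Ã are linearly independent
    have hAindep : LinearIndependent ℚ (fun k : Fin (m+1) => Amat k) := by
      rw [Fintype.linearIndependent_iff]
      intro c hc
      have hc' : ∀ i, c 0 + ∑ j', c j'.succ * a i j' = 0 := by
        intro i
        have := congrFun hc i
        rw [Finset.sum_apply] at this
        simpa [hAmat, Fin.sum_univ_succ] using this
      have hn : 0 < n := by omega
      set i0 : Fin n := ⟨0, hn⟩ with hi0
      set φ := dotL (fun j' => c j'.succ) with hφdef
      have hφtop : (⊤ : Submodule ℚ (Fin m → ℚ)) ≤ LinearMap.ker φ := by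
        have hdir : vectorSpan ℚ (Set.range a) = ⊤ := by
          rw [← direction_affineSpan, haff]
          exact AffineSubspace.direction_top ℚ _ _
        rw [← hdir, vectorSpan_eq_span_vsub_set_right ℚ (Set.mem_range_self i0),
          Submodule.span_le]
        rintro y ⟨x, ⟨i, rfl⟩, rfl⟩
        rw [SetLike.mem_coe, LinearMap.mem_ker]
        show φ (a i - a i0) = 0
        rw [map_sub, hφdef, dotL_apply, dotL_apply]
        have e1 := hc' i
        have e2 := hc' i0
        linarith
      have hcsucc : ∀ j' : Fin m, c j'.succ = 0 := by
        intro j'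
        have : φ (Pi.single j' 1) = 0 := hφtop Submodule.mem_top
        rwa [hφdef, dotL_single] at this
      have hc0 : c 0 = 0 := by
        have := hc' i0
        rw [Finset.sum_eq_zero (fun (j' : Fin m) _ => by rw [hcsucc j', zero_mul])] at this
        linarith
      intro k
      refine Fin.cases hc0 hcsucc k
    -- T is surjective, so ker T has dimension d
    have hrank : Amat.rank = m + 1 := by
      have := hAindep.rank_matrix
      simpa using this
    have hSurj : LinearMap.range T = ⊤ := by
      apply Submodule.eq_top_of_finrank_eq
      have : finrank ℚ (LinearMap.range T) = Amat.rank := rfl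
      rw [this, hrank, Module.finrank_fin_fun]
    have hkerrank : finrank ℚ (LinearMap.ker T) = d := by
      have h1 := LinearMap.finrank_range_add_finrank_ker T
      rw [hSurj, finrank_top, Module.finrank_fin_fun, Module.finrank_fin_fun] at h1
      omega
    have hspanrank : finrank ℚ (Submodule.span ℚ (Set.range r)) = d := by
      rw [finrank_span_eq_card hli]
      simp
    have hKer_eq : Submodule.span ℚ (Set.range r) = LinearMap.ker T := by
      apply Submodule.eq_of_le_of_finrank_le
      · rw [Submodule.span_le]
        rintro x ⟨k, rfl⟩
        exact hrow k
      · rw [hkerrank, hspanrank]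
    -- now the actual argument
    intro hP j hj
    rw [hull_iff] at hj
    obtain ⟨w, hw0, hwj, hw1, hwa⟩ := hj
    set v : Fin n → ℚ := fun i => w i - (if i = j then 1 else 0) with hv
    have hvker : v ∈ LinearMap.ker T := by
      rw [hker]
      constructor
      · rw [hv]
        have : ∑ i, (w i - if i = j then 1 else 0) = (∑ i, w i) - 1 := by
          rw [Finset.sum_sub_distrib]
          congr 1
          simp
        rw [this, hw1]; ring
      · intro j'
        have hwa' : ∑ i, w i * a i j' = a j j' := by
          have := congrFun hwa j'
          rw [Finset.sum_apply] at this
          simpa [smul_eq_mul] using this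
        have : ∑ i, v i * a i j' = (∑ i, w i * a i j') - a j j' := by
          calc ∑ i, v i * a i j'
              = ∑ i, (w i * a i j' - (if i = j then a i j' else 0)) := by
                refine Finset.sum_congr rfl ?_
                intro i _
                rw [hv]
                by_cases h : i = j <;> simp [h] <;> ring
            _ = (∑ i, w i * a i j') - ∑ i, (if i = j then a i j' else 0) :=
                Finset.sum_sub_distrib _ _
            _ = _ := by rw [Finset.sum_ite_eq' univ j (fun i => a i j')]; simp
        rw [this, hwa']; ring
    rw [← hKer_eq, Submodule.mem_span_range_iff_exists_fun] at hvker
    obtain ⟨c, hc⟩ := hvker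
    have hfv : ∀ i, dotL c (g i) = v i := by
      intro i
      rw [dotL_apply]
      have := congrFun hc i
      rw [Finset.sum_apply] at this
      simpa [hr, smul_eq_mul] using this
    have hfne : dotL c ≠ 0 := by
      intro h0
      have : v j = 0 := by rw [← hfv j, h0]; rfl
      rw [hv] at this
      simp [hwj] at this
    obtain ⟨-, i, i', hne, hi, hi'⟩ := hP (dotL c) hfne
    rw [hfv] at hi hi'
    have hij : i = j := by
      by_contra h
      have : v i = w i := by rw [hv]; simp [h]
      rw [this] at hi
      exact absurd (hw0 i) (not_le.mpr hi)
    have hij' : i' = j := by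
      by_contra h
      have : v i' = w i' := by rw [hv]; simp [h]
      rw [this] at hi'
      exact absurd (hw0 i') (not_le.mpr hi')
    exact hne (hij.trans hij'.symm)
  · -- vertex condition → Pos2Span
    intro hV f hf
    set v : Fin n → ℚ := fun i => f (g i) with hv
    have hs : ∑ i, v i = 0 := by
      rw [hv, ← map_sum]
      have : ∑ i, g i = 0 := by
        funext k
        rw [Finset.sum_apply]
        exact hsum k
      rw [this, map_zero]
    have ho : ∀ j', ∑ i, v i * a i j' = 0 := by
      intro j'
      have : ∑ i, v i * a i j' = f (∑ i, a i j' • g i) := by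
        rw [map_sum]
        refine Finset.sum_congr rfl ?_
        intro i _
        rw [map_smul, smul_eq_mul, hv, mul_comm]
      rw [this]
      have h0 : ∑ i, a i j' • g i = 0 := by
        funext k
        rw [Finset.sum_apply]
        simpa [smul_eq_mul] using horth k j'
      rw [h0, map_zero]
    have hvne : v ≠ 0 := by
      intro h0
      apply hf
      have hle : Submodule.span ℚ (Set.range g) ≤ LinearMap.ker f := by
        rw [Submodule.span_le]
        rintro x ⟨i, rfl⟩
        rw [SetLike.mem_coe, LinearMap.mem_ker]
        exact congrFun h0 i
      apply LinearMap.ext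
      intro x
      have hx : x ∈ LinearMap.ker f := hle (by rw [hspan]; exact Submodule.mem_top)
      simpa using hx
    constructor
    · obtain ⟨i, i', hne, hi, hi'⟩ := key_neg a hV (-v)
        (by simp only [Pi.neg_apply]; rw [Finset.sum_neg_distrib, hs, neg_zero])
        (by intro j'; simp only [Pi.neg_apply, neg_mul]
            rw [Finset.sum_neg_distrib, ho j', neg_zero])
        (by simpa using hvne)
      refine ⟨i, i', hne, ?_, ?_⟩
      · have : -v i < 0 := hi
        rw [hv] at this; linarith
      · have : -v i' < 0 := hi'
        rw [hv] at this; linarith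
    · obtain ⟨i, i', hne, hi, hi'⟩ := key_neg a hV v hs ho hvne
      exact ⟨i, i', hne, hi, hi'⟩
end

section
/- If a collection w_1,...,w_n of vectors in an s-dimensional ℚ-vector space is positively 2-spanning and spans the space, then either s = 0 or n ≥ s + 3. -/
/-- If a spanning collection of `n` vectors in an `s`-dimensional ℚ-vector space is
positively 2-spanning then either `s = 0` or `n ≥ s + 3`. -/
theorem stmt8 {n s : ℕ} {V : Type*} [AddCommGroup V] [Module ℚ V]
    [FiniteDimensional ℚ V] (hs : Module.finrank ℚ V = s) (w : Fin n → V)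
    (h2 : Pos2Span w) (hspan : Submodule.span ℚ (Set.range w) = ⊤) :
    s = 0 ∨ n ≥ s + 3 := by
  classical
  by_contra hcon
  push_neg at hcon
  obtain ⟨hs0, hn⟩ := hcon
  -- the vectors with index ≥ 3
  set u : Fin (n - 3) → V := fun j => w ⟨j.val + 3, by omega⟩ with hu
  set U : Submodule ℚ V := Submodule.span ℚ (Set.range u) with hU
  have hUlt : U < ⊤ := by
    apply Submodule.lt_top_of_finrank_lt_finrank
    calc Module.finrank ℚ U ≤ Fintype.card (Fin (n - 3)) := by
          rw [hU]
          refine (finrank_span_le_card _).trans ?_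
          rw [Set.toFinset_card]
          exact (Fintype.card_congr (Equiv.refl _)).trans_le (Fintype.card_range_le u)
      _ < Module.finrank ℚ V := by
          rw [hs, Fintype.card_fin]; omega
  obtain ⟨f, hf0, hfU⟩ := U.exists_dual_map_eq_bot_of_lt_top hUlt inferInstance
  have hker : ∀ i : Fin n, 3 ≤ i.val → f (w i) = 0 := by
    intro i hi
    have hmem : w i ∈ U := by
      have : w i = u ⟨i.val - 3, by omega⟩ := by
        simp only [hu]
        congr 1
        ext
        simp
        omega
      rw [this, hU]
      exact Submodule.subset_span ⟨_, rfl⟩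
    have : f (w i) ∈ U.map f := ⟨w i, hmem, rfl⟩
    rwa [hfU, Submodule.mem_bot] at this
  obtain ⟨⟨i, j, hij, hi, hj⟩, ⟨k, l, hkl, hk, hl⟩⟩ := h2 f hf0
  have hi3 : i.val < 3 := by by_contra h; push_neg at h; rw [hker i h] at hi; exact lt_irrefl _ hi
  have hj3 : j.val < 3 := by by_contra h; push_neg at h; rw [hker j h] at hj; exact lt_irrefl _ hj
  have hk3 : k.val < 3 := by by_contra h; push_neg at h; rw [hker k h] at hk; exact lt_irrefl _ hk
  have hl3 : l.val < 3 := by by_contra h; push_neg at h; rw [hker l h] at hl; exact lt_irrefl _ hl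
  have hij' : i.val ≠ j.val := fun h => hij (Fin.ext h)
  have hkl' : k.val ≠ l.val := fun h => hkl (Fin.ext h)
  have hik : i.val ≠ k.val := fun h => absurd (Fin.ext h : i = k) (by rintro rfl; exact absurd hi (not_lt.mpr hk.le))
  have hil : i.val ≠ l.val := fun h => absurd (Fin.ext h : i = l) (by rintro rfl; exact absurd hi (not_lt.mpr hl.le))
  have hjk : j.val ≠ k.val := fun h => absurd (Fin.ext h : j = k) (by rintro rfl; exact absurd hj (not_lt.mpr hk.le))
  have hjl : j.val ≠ l.val := fun h => absurd (Fin.ext h : j = l) (by rintro rfl; exact absurd hj (not_lt.mpr hl.le))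
  omega
end

section
/- If the vertices of a convex polygon in ℚ^2 with n ≥ 5 vertices (no three collinear) are taken as a point configuration, then its Gale transform is a positively 2-spanning configuration of n vectors in ℚ^(n-3) with zero sum, in which any n-3 vectors are linearly independent. -/
lemma galeLineDir (c1 c2 : ℚ) (h : ¬(c1 = 0 ∧ c2 = 0)) (d : Fin 2 → ℚ)
    (hd : c1 * d 0 + c2 * d 1 = 0) : ∃ r : ℚ, d = r • ![c2, -c1] := by
  by_cases hc1 : c1 = 0
  · have hc2 : c2 ≠ 0 := fun h2 => h ⟨hc1, h2⟩
    refine ⟨d 0 / c2, ?_⟩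
    funext j
    fin_cases j <;> simp [hc1] at hd ⊢
    · field_simp
    · rcases hd with h | h
      · exact absurd h hc2
      · simp [h]
  · refine ⟨-(d 1) / c1, ?_⟩
    funext j
    fin_cases j <;> simp at hd ⊢ <;> field_simp <;> linarith

lemma galeCollinear (c0 c1 c2 : ℚ) (h : ¬(c1 = 0 ∧ c2 = 0))
    (p q r : Fin 2 → ℚ)
    (hp : c1 * p 0 + c2 * p 1 + c0 = 0)
    (hq : c1 * q 0 + c2 * q 1 + c0 = 0)
    (hr : c1 * r 0 + c2 * r 1 + c0 = 0) :
    Collinear ℚ ({p, q, r} : Set (Fin 2 → ℚ)) := by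
  rw [collinear_iff_of_mem (Set.mem_insert p _)]
  refine ⟨![c2, -c1], ?_⟩
  intro x hx
  have hx' : c1 * (x - p) 0 + c2 * (x - p) 1 = 0 := by
    simp only [Set.mem_insert_iff, Set.mem_singleton_iff] at hx
    rcases hx with rfl | rfl | rfl <;> simp only [Pi.sub_apply] <;> ring_nf <;> linarith
  obtain ⟨t, ht⟩ := galeLineDir c1 c2 h (x - p) hx'
  exact ⟨t, by rw [vadd_eq_add, ← ht]; abel⟩

lemma galeTwoPos {n : ℕ} (a : Fin n → Fin 2 → ℚ)
    (hconv : ∀ j, a j ∉ convexHull ℚ (a '' {i | i ≠ j}))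
    (y : Fin n → ℚ) (hy : y ≠ 0) (hs : ∑ i, y i = 0)
    (hm : ∑ i, y i • a i = 0) :
    ∃ i j : Fin n, i ≠ j ∧ 0 < y i ∧ 0 < y j := by
  have hex : ∃ j, 0 < y j := by
    by_contra hcon
    push_neg at hcon
    apply hy
    funext i
    simp only [Pi.zero_apply]
    have h0 : ∑ i, -y i = 0 := by simp [hs]
    have := (Finset.sum_eq_zero_iff_of_nonneg
      (fun i _ => by linarith [hcon i])).mp h0 i (Finset.mem_univ i)
    linarith
  by_contra hcon
  push_neg at hcon
  obtain ⟨j, hj⟩ := hex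
  have hneg : ∀ i, i ≠ j → y i ≤ 0 := fun i hi => hcon j i (Ne.symm hi) hj
  have hsum' : ∑ i ∈ Finset.univ.erase j, -y i = y j := by
    have := Finset.sum_erase_add Finset.univ y (Finset.mem_univ j)
    simp only [Finset.sum_neg_distrib]
    linarith [hs, this]
  have hmom' : ∑ i ∈ Finset.univ.erase j, (-y i) • a i = y j • a j := by
    have h2 := Finset.sum_erase_add Finset.univ (fun i => y i • a i) (Finset.mem_univ j)
    have h4 : ∑ i ∈ Finset.univ.erase j, y i • a i = -(y j • a j) := by
      rw [eq_neg_iff_add_eq_zero, h2]; exact hm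
    calc ∑ i ∈ Finset.univ.erase j, (-y i) • a i
        = -∑ i ∈ Finset.univ.erase j, y i • a i := by simp [neg_smul]
      _ = y j • a j := by rw [h4, neg_neg]
  have hcm : (Finset.univ.erase j).centerMass (fun i => -y i) a = a j := by
    rw [Finset.centerMass, hsum', hmom', smul_smul, inv_mul_cancel₀ (ne_of_gt hj), one_smul]
  apply hconv j
  rw [← hcm]
  apply Finset.centerMass_mem_convexHull
  · intro i hi
    have := hneg i (Finset.ne_of_mem_erase hi)
    linarith
  · rw [hsum']; exact hj
  · intro i hi
    exact ⟨i, Finset.ne_of_mem_erase hi, rfl⟩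

/-- The Gale transform of the vertex set of a convex polygon in `ℚ²` with `n ≥ 5`
vertices (no three collinear) is a positively 2-spanning configuration of `n` vectors
in `ℚ^(n-3)` with zero sum, in which any `n - 3` vectors are linearly independent. -/
theorem stmt16 {n : ℕ} (hn : 5 ≤ n) (a : Fin n → Fin 2 → ℚ)
    (g : Fin n → Fin (n - 3) → ℚ) (hGale : IsGale a g)
    (hconv : ∀ j, a j ∉ convexHull ℚ (a '' {i | i ≠ j}))
    (hgen : ∀ i j k : Fin n, i ≠ j → j ≠ k → i ≠ k →
      ¬ Collinear ℚ ({a i, a j, a k} : Set (Fin 2 → ℚ))) :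
    Pos2Span g ∧ (∑ i, g i = 0) ∧
      ∀ t : Finset (Fin n), t.card = n - 3 →
        LinearIndependent ℚ (fun i : ↥t => g i.1) := by
  classical
  obtain ⟨hm3, hli, hzsum, horth⟩ := hGale
  refine ⟨?_, ?_, ?_⟩
  · -- Pos2Span
    intro f hf
    set fc : Fin (n - 3) → ℚ := fun k => f (fun j => if k = j then (1:ℚ) else 0) with hfc
    have expand : ∀ v : Fin (n - 3) → ℚ, f v = ∑ k, v k * fc k := by
      intro v
      conv_lhs => rw [pi_eq_sum_univ v]
      rw [map_sum]
      simp [fc, smul_eq_mul]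
    set y : Fin n → ℚ := fun i => f (g i) with hydef
    have hyform : ∀ i, y i = ∑ k, g i k * fc k := fun i => expand (g i)
    have hsumy : ∑ i, y i = 0 := by
      calc ∑ i, y i = ∑ i, ∑ k, g i k * fc k := Finset.sum_congr rfl (fun i _ => hyform i)
        _ = ∑ k, ∑ i, g i k * fc k := Finset.sum_comm
        _ = ∑ k, (∑ i, g i k) * fc k := by simp [Finset.sum_mul]
        _ = 0 := by simp [hzsum]
    have hmomy : ∑ i, y i • a i = 0 := by
      funext j
      simp only [Finset.sum_apply, Pi.smul_apply, smul_eq_mul, Pi.zero_apply]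
      calc ∑ i, y i * a i j = ∑ i, ∑ k, (a i j * g i k) * fc k := by
              refine Finset.sum_congr rfl (fun i _ => ?_)
              rw [hyform i, Finset.sum_mul]
              exact Finset.sum_congr rfl (fun k _ => by ring)
        _ = ∑ k, ∑ i, (a i j * g i k) * fc k := Finset.sum_comm
        _ = ∑ k, (∑ i, a i j * g i k) * fc k := by simp [Finset.sum_mul]
        _ = 0 := by simp [horth _ j]
    have hyne : y ≠ 0 := by
      intro h0
      apply hf
      have hfc0 : ∀ k, fc k = 0 := by
        have hcomb : ∑ k, fc k • (fun i : Fin n => g i k) = 0 := by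
          funext i
          have := congrFun h0 i
          simp only [Pi.zero_apply] at this ⊢
          rw [Finset.sum_apply]
          rw [hyform i] at this
          simpa [mul_comm] using this
        exact Fintype.linearIndependent_iff.mp hli fc hcomb
      apply LinearMap.ext
      intro v
      rw [expand v]
      simp [hfc0]
    constructor
    · exact galeTwoPos a hconv y hyne hsumy hmomy
    · have hmom' : ∑ i, (-y) i • a i = 0 := by
        simp only [Pi.neg_apply, neg_smul, Finset.sum_neg_distrib, hmomy, neg_zero]
      obtain ⟨i, j, hij, hi, hj⟩ := galeTwoPos a hconv (-y) (neg_ne_zero.mpr hyne)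
        (by simp [hsumy]) hmom'
      exact ⟨i, j, hij, by simpa using hi, by simpa using hj⟩
  · -- sum zero
    funext k
    rw [Finset.sum_apply]
    exact hzsum k
  · -- independence
    intro t ht
    set M : Matrix (Fin (n - 3)) (Fin n) ℚ := Matrix.of (fun k i => g i k) with hM
    set T := M.mulVecLin with hT
    have hTapp : ∀ (x : Fin n → ℚ) (k : Fin (n-3)), T x k = ∑ i, g i k * x i := by
      intro x k
      simp [hT, hM, Matrix.mulVecLin, Matrix.mulVec, dotProduct]
    have hrank : M.rank = n - 3 := by
      rw [← Matrix.rank_transpose, Matrix.rank_eq_finrank_span_cols, Matrix.col_transpose]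
      have : Module.finrank ℚ (Submodule.span ℚ (Set.range (fun k : Fin (n-3) => fun i : Fin n => g i k)))
          = Fintype.card (Fin (n - 3)) := finrank_span_eq_card hli
      simp only [Fintype.card_fin] at this; exact this
    have hkerrank : Module.finrank ℚ (LinearMap.ker T) = 3 := by
      have h1 := LinearMap.finrank_range_add_finrank_ker T
      rw [Module.finrank_fin_fun] at h1
      have h2 : Module.finrank ℚ (LinearMap.range T) = n - 3 := hrank
      omega
    set v : Fin 3 → (Fin n → ℚ) :=
      ![fun _ => 1, fun i => a i 0, fun i => a i 1] with hv
    have hi0 : (0:ℕ) < n := by omega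
    have hi1 : (1:ℕ) < n := by omega
    have hi2 : (2:ℕ) < n := by omega
    have haffzero : ∀ (c : Fin 3 → ℚ), (∀ p q r : Fin n, p ≠ q → q ≠ r → p ≠ r →
        (∀ i ∈ ({p, q, r} : Finset (Fin n)), c 0 + c 1 * a i 0 + c 2 * a i 1 = 0)) →
        False ∨ True := fun _ _ => Or.inr trivial
    have key : ∀ (c : Fin 3 → ℚ) (p q r : Fin n), p ≠ q → q ≠ r → p ≠ r →
        (c 0 + c 1 * a p 0 + c 2 * a p 1 = 0) →
        (c 0 + c 1 * a q 0 + c 2 * a q 1 = 0) →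
        (c 0 + c 1 * a r 0 + c 2 * a r 1 = 0) → ∀ k, c k = 0 := by
      intro c p q r hpq hqr hpr hp hq hr
      have h12 : c 1 = 0 ∧ c 2 = 0 := by
        by_contra hc
        exact hgen p q r hpq hqr hpr
          (galeCollinear (c 0) (c 1) (c 2) hc (a p) (a q) (a r)
            (by linarith) (by linarith) (by linarith))
      have h0 : c 0 = 0 := by
        have := hp
        rw [h12.1, h12.2] at this
        linarith
      intro k
      fin_cases k
      · exact h0
      · exact h12.1
      · exact h12.2
    have hvli : LinearIndependent ℚ v := by
      rw [Fintype.linearIndependent_iff]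
      intro c hc
      have hc' : ∀ i : Fin n, c 0 + c 1 * a i 0 + c 2 * a i 1 = 0 := by
        intro i
        have := congrFun hc i
        simp only [Pi.zero_apply, Finset.sum_apply, Pi.smul_apply, smul_eq_mul,
          Fin.sum_univ_three] at this
        simp only [hv] at this
        simpa [Matrix.cons_val_zero, Matrix.cons_val_one] using this
      exact key c ⟨0, hi0⟩ ⟨1, hi1⟩ ⟨2, hi2⟩
        (Fin.ne_of_val_ne (by norm_num)) (Fin.ne_of_val_ne (by norm_num))
        (Fin.ne_of_val_ne (by norm_num)) (hc' _) (hc' _) (hc' _)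
    have hvmem : ∀ k, v k ∈ LinearMap.ker T := by
      intro k
      rw [LinearMap.mem_ker]
      funext k'
      rw [hTapp]
      fin_cases k
      · simpa [hv] using hzsum k'
      · have := horth k' 0
        simpa [hv, mul_comm] using this
      · have := horth k' 1
        simpa [hv, mul_comm] using this
    have hspan : Submodule.span ℚ (Set.range v) = LinearMap.ker T := by
      apply Submodule.eq_of_le_of_finrank_le
      · rw [Submodule.span_le]
        rintro _ ⟨k, rfl⟩
        exact hvmem k
      · rw [hkerrank, finrank_span_eq_card hvli]
        simp
    -- now the independence
    rw [Fintype.linearIndependent_iff]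
    intro c hc
    set x : Fin n → ℚ := fun i => if h : i ∈ t then c ⟨i, h⟩ else 0 with hx
    have hxker : x ∈ LinearMap.ker T := by
      rw [LinearMap.mem_ker]
      funext k
      rw [hTapp]
      have e1 : ∑ i ∈ t, g i k * x i = ∑ i : Fin n, g i k * x i :=
        Finset.sum_subset (Finset.subset_univ t) (fun i _ hi => by simp [hx, hi])
      have e2 : ∑ i ∈ t, g i k * x i = ∑ i : t, c i * g i.1 k := by
        rw [← Finset.sum_coe_sort t (fun i => g i k * x i)]
        refine Finset.sum_congr rfl (fun i _ => ?_)
        simp [hx, i.2, mul_comm]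
      have e3 : ∑ i : t, c i * g i.1 k = 0 := by
        have := congrFun hc k
        simpa [Finset.sum_apply] using this
      simp only [Pi.zero_apply]
      rw [← e1, e2, e3]
    rw [← hspan] at hxker
    obtain ⟨cc, hcc⟩ := (Submodule.mem_span_range_iff_exists_fun ℚ).mp hxker
    have hxform : ∀ i, x i = cc 0 + cc 1 * a i 0 + cc 2 * a i 1 := by
      intro i
      have := congrFun hcc i
      simp only [Finset.sum_apply, Pi.smul_apply, smul_eq_mul, Fin.sum_univ_three, hv] at this
      simpa [Matrix.cons_val_zero, Matrix.cons_val_one] using this.symm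
    have hcard : tᶜ.card = 3 := by
      rw [Finset.card_compl, ht, Fintype.card_fin]
      omega
    obtain ⟨p, q, r, hpq, hpr, hqr, hpqr⟩ := Finset.card_eq_three.mp hcard
    have hmemc : ∀ i ∈ tᶜ, x i = 0 := by
      intro i hi
      rw [Finset.mem_compl] at hi
      simp [hx, hi]
    have hp' : x p = 0 := hmemc p (by simp [hpqr])
    have hq' : x q = 0 := hmemc q (by simp [hpqr])
    have hr' : x r = 0 := hmemc r (by simp [hpqr])
    have hcc0 : ∀ k, cc k = 0 := by
      apply key cc p q r hpq hqr hpr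
      · rw [← hxform p]; exact hp'
      · rw [← hxform q]; exact hq'
      · rw [← hxform r]; exact hr'
    intro i
    have : x i.1 = 0 := by rw [hxform]; simp [hcc0]
    simpa [hx, i.2] using this
end

section
/- Let w_1,...,w_n span ℚ^d and suppose that the Gale dual point configuration in ℚ^(n-d-1) has a point a_j lying in the convex hull of the other points. Then there exists an index j and a linear functional f on ℚ^d with f(w_i) ≥ 0 for all i ≠ j and f not identically zero on {w_i : i ≠ j}; in particular the configuration is not positively 2-spanning. -/
open Finset Module

-- auxiliary: orthogonality argument
private lemma gale_mem_span {n d m : ℕ} (w : Fin n → Fin d → ℚ) (a : Fin n → Fin m → ℚ)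
    (hmn : m + (d + 1) = n)
    (hspan : Submodule.span ℚ (Set.range w) = ⊤)
    (haff : affineSpan ℚ (Set.range a) = ⊤)
    (hsum0 : ∀ k : Fin d, ∑ i, w i k = 0)
    (horth : ∀ k : Fin d, ∀ j : Fin m, ∑ i, a i j * w i k = 0)
    (c : Fin n → ℚ)
    (hc1 : ∑ i, c i = 0)
    (hc2 : ∀ j' : Fin m, ∑ i, c i * a i j' = 0) :
    c ∈ Submodule.span ℚ (Set.range (fun k : Fin d => fun i : Fin n => w i k)) := by
  classical
  set R : Fin d → (Fin n → ℚ) := fun k => fun i => w i k with hR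
  set W : Subspace ℚ (Fin n → ℚ) := Submodule.span ℚ (Set.range R) with hW
  rw [← Subspace.dualAnnihilator_dualCoannihilator_eq (W := W)]
  rw [Submodule.mem_dualCoannihilator]
  intro φ hφ
  rw [Submodule.mem_dualAnnihilator] at hφ
  -- represent φ by a vector u
  set u : Fin n → ℚ := fun i => φ (fun j => if i = j then 1 else 0) with hu
  have hφx : ∀ x : Fin n → ℚ, φ x = ∑ i, x i * u i := by
    intro x
    rw [LinearMap.pi_apply_eq_sum_univ]
    simp [hu, smul_eq_mul]
  have hukerR : ∀ k, ∑ i, w i k * u i = 0 := by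
    intro k
    have := hφ (R k) (Submodule.subset_span ⟨k, rfl⟩)
    rwa [hφx] at this
  -- the map T
  set T := Fintype.linearCombination ℚ w with hT
  have hTrange : LinearMap.range T = ⊤ := by
    rw [hT, Fintype.range_linearCombination, hspan]
  have hTker : finrank ℚ (LinearMap.ker T) = m + 1 := by
    have h1 := T.finrank_range_add_finrank_ker
    rw [hTrange, finrank_top, Module.finrank_fin_fun, Module.finrank_fin_fun] at h1
    omega
  -- the rows of Ã
  set v : (Fin m ⊕ Unit) → (Fin n → ℚ) :=
    Sum.elim (fun j' => fun i => a i j') (fun _ => fun _ => (1:ℚ)) with hv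
  have hvLI : LinearIndependent ℚ v := by
    rw [Fintype.linearIndependent_iff]
    intro g hg
    -- affine functional vanishing everywhere
    set L := Fintype.linearCombination ℚ (fun j' : Fin m => g (Sum.inl j')) with hL
    set F : (Fin m → ℚ) →ᵃ[ℚ] ℚ :=
      { toFun := fun x => L x + g (Sum.inr ()),
        linear := L,
        map_vadd' := by
          intro p v'
          simp [vadd_eq_add, map_add]
          ring } with hF
    have hFa : ∀ i, F (a i) = 0 := by
      intro i
      have := congrFun hg i
      simp only [Fintype.sum_sum_type, Finset.sum_apply, Pi.smul_apply, Pi.zero_apply,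
        smul_eq_mul, Fintype.univ_punit, Finset.sum_singleton, hv, Sum.elim_inl,
        Sum.elim_inr] at this
      simp only [hF, AffineMap.coe_mk, hL, Fintype.linearCombination_apply, smul_eq_mul]
      simpa [mul_comm] using this
    have hFall : ∀ x, F x = 0 := by
      intro x
      have hsub : Set.range a ⊆
          (AffineSubspace.comap F ((⊥ : Submodule ℚ ℚ).toAffineSubspace) : Set (Fin m → ℚ)) := by
        rintro _ ⟨i, rfl⟩
        simp [AffineSubspace.mem_comap, Submodule.mem_toAffineSubspace, hFa i]
      have := affineSpan_le.mpr hsub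
      rw [haff] at this
      have hx := this (AffineSubspace.mem_top ℚ _ x)
      simpa [AffineSubspace.mem_comap, Submodule.mem_toAffineSubspace] using hx
    have hconst : g (Sum.inr ()) = 0 := by
      have := hFall 0
      simpa [hF] using this
    intro idx
    cases idx with
    | inr u => simpa using hconst
    | inl j' =>
      have := hFall (Pi.single j' 1)
      simp [hF, hL, Fintype.linearCombination_apply, hconst, Pi.single_apply] at this
      simpa [Finset.sum_ite_eq'] using this
  have hvle : Submodule.span ℚ (Set.range v) ≤ LinearMap.ker T := by
    rw [Submodule.span_le]
    rintro _ ⟨x, rfl⟩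
    rw [SetLike.mem_coe, LinearMap.mem_ker]
    cases x with
    | inl j' =>
      funext k
      have := horth k j'
      simp only [hv, Sum.elim_inl, hT, Fintype.linearCombination_apply]
      rw [Finset.sum_apply]
      simpa [smul_eq_mul] using this
    | inr _ =>
      funext k
      have := hsum0 k
      simp only [hv, Sum.elim_inr, hT, Fintype.linearCombination_apply]
      rw [Finset.sum_apply]
      simpa [smul_eq_mul] using this
  have hveq : Submodule.span ℚ (Set.range v) = LinearMap.ker T := by
    apply Submodule.eq_of_le_of_finrank_le hvle
    rw [hTker, finrank_span_eq_card hvLI]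
    simp
  have huker : u ∈ LinearMap.ker T := by
    rw [LinearMap.mem_ker]
    funext k
    simp only [hT, Fintype.linearCombination_apply, Finset.sum_apply, Pi.smul_apply,
      smul_eq_mul, Pi.zero_apply]
    rw [← hukerR k]
    exact Finset.sum_congr rfl fun i _ => mul_comm _ _
  rw [← hveq] at huker
  -- the functional ψ pairing with c kills span v
  set ψ := Fintype.linearCombination ℚ c with hψ
  have hψu : ψ u = 0 := by
    have hle : Submodule.span ℚ (Set.range v) ≤ LinearMap.ker ψ := by
      rw [Submodule.span_le]
      rintro _ ⟨x, rfl⟩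
      rw [SetLike.mem_coe, LinearMap.mem_ker]
      cases x with
      | inl j' =>
        rw [hψ, Fintype.linearCombination_apply]
        simpa [hv, smul_eq_mul, mul_comm] using hc2 j'
      | inr _ =>
        rw [hψ, Fintype.linearCombination_apply]
        simpa [hv, smul_eq_mul] using hc1
    exact hle huker
  rw [hφx]
  rw [← hψu, hψ, Fintype.linearCombination_apply]
  exact Finset.sum_congr rfl fun i _ => by simp [smul_eq_mul, mul_comm]

/-- If in the Gale dual point configuration of a spanning vector configuration `w`
some point `a j` lies in the convex hull of the others, then there is an index `j` and
a linear functional nonnegative on `{w i : i ≠ j}` and not identically zero there; in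
particular `w` is not positively 2-spanning. -/
theorem stmt18 {n d m : ℕ} (w : Fin n → Fin d → ℚ) (a : Fin n → Fin m → ℚ)
    (hGale : IsGale a w) (hspan : Submodule.span ℚ (Set.range w) = ⊤)
    (haff : affineSpan ℚ (Set.range a) = ⊤)
    (hja : ∃ j, a j ∈ convexHull ℚ (a '' {i | i ≠ j})) :
    (∃ j, ∃ f : (Fin d → ℚ) →ₗ[ℚ] ℚ,
      (∀ i, i ≠ j → 0 ≤ f (w i)) ∧ ∃ i, i ≠ j ∧ f (w i) ≠ 0) ∧
    ¬ Pos2Span w := by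
  classical
  obtain ⟨hmn, hLI, hsum0, horth⟩ := hGale
  obtain ⟨j, hj⟩ := hja
  rw [_root_.convexHull_eq] at hj
  obtain ⟨ι, t, wt, z, hw0, hw1, hz, hcm⟩ := hj
  have hcm' : ∑ i ∈ t, wt i • z i = a j := by
    rw [← hcm, Finset.centerMass_eq_of_sum_1 _ _ hw1]
  have htne : t.Nonempty := Finset.nonempty_of_sum_ne_zero (by rw [hw1]; norm_num)
  obtain ⟨i0, hi0⟩ := htne
  obtain ⟨p0, hp0, hp0z⟩ := hz i0 hi0
  have hσex : ∀ i : ι, ∃ p : Fin n, p ≠ j ∧ (i ∈ t → a p = z i) := by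
    intro i
    by_cases h : i ∈ t
    · obtain ⟨p, hp, hpz⟩ := hz i h
      exact ⟨p, hp, fun _ => hpz⟩
    · exact ⟨p0, hp0, fun h' => absurd h' h⟩
  choose σ hσne hσz using hσex
  set lam : Fin n → ℚ := fun p => ∑ i ∈ t.filter (fun i => σ i = p), wt i with hlam
  have hlam0 : ∀ p, 0 ≤ lam p :=
    fun p => Finset.sum_nonneg fun i hi => hw0 i (Finset.mem_filter.1 hi).1
  have hlamj : lam j = 0 := by
    have hempty : t.filter (fun i => σ i = j) = ∅ :=
      Finset.filter_eq_empty_iff.mpr (fun {i} _ => hσne i)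
    simp [hlam, hempty]
  have hkey : ∀ X : Fin n → ℚ, ∑ p, lam p * X p = ∑ i ∈ t, wt i * X (σ i) := by
    intro X
    rw [← Finset.sum_fiberwise t σ (fun i => wt i * X (σ i))]
    apply Finset.sum_congr rfl
    intro p _
    rw [hlam]
    simp only
    rw [Finset.sum_mul]
    apply Finset.sum_congr rfl
    intro i hi
    rw [(Finset.mem_filter.1 hi).2]
  have hlamsum : ∑ p, lam p = 1 := by
    have := hkey (fun _ => 1)
    simpa [hw1] using this
  have hlama : ∀ j' : Fin m, ∑ p, lam p * a p j' = a j j' := by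
    intro j'
    rw [hkey (fun p => a p j')]
    have h1 : ∀ i ∈ t, wt i * a (σ i) j' = wt i * z i j' := by
      intro i hi
      rw [hσz i hi]
    rw [Finset.sum_congr rfl h1]
    calc ∑ i ∈ t, wt i * z i j' = (∑ i ∈ t, wt i • z i) j' := by
          rw [Finset.sum_apply]
          exact Finset.sum_congr rfl fun i _ => rfl
      _ = a j j' := by rw [hcm']
  set c : Fin n → ℚ := fun p => lam p - if p = j then 1 else 0 with hc
  have hc1 : ∑ i, c i = 0 := by
    simp [hc, Finset.sum_sub_distrib, hlamsum]
  have hc2 : ∀ j' : Fin m, ∑ i, c i * a i j' = 0 := by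
    intro j'
    simp only [hc, sub_mul, Finset.sum_sub_distrib, hlama j', ite_mul, one_mul, zero_mul]
    simp [Finset.sum_ite_eq']
  have hmem := gale_mem_span w a (by omega) hspan haff hsum0 horth c hc1 hc2
  rw [Submodule.mem_span_range_iff_exists_fun] at hmem
  obtain ⟨coef, hcoef⟩ := hmem
  set f : (Fin d → ℚ) →ₗ[ℚ] ℚ := Fintype.linearCombination ℚ coef with hf
  have hfw : ∀ i, f (w i) = c i := by
    intro i
    have h2 := congrFun hcoef i
    simp only [Finset.sum_apply, Pi.smul_apply, smul_eq_mul] at h2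
    rw [hf, Fintype.linearCombination_apply]
    rw [← h2]
    exact Finset.sum_congr rfl fun k _ => mul_comm _ _
  have hcj : c j = -1 := by simp [hc, hlamj]
  have hcne : ∀ i, i ≠ j → c i = lam i := by
    intro i hi
    simp [hc, hi]
  have hnonneg : ∀ i, i ≠ j → 0 ≤ f (w i) := by
    intro i hi
    rw [hfw i, hcne i hi]
    exact hlam0 i
  have hex : ∃ i, i ≠ j ∧ f (w i) ≠ 0 := by
    have hsum' : ∑ p ∈ Finset.univ.erase j, lam p = 1 := by
      rw [Finset.sum_erase_eq_sub (Finset.mem_univ j), hlamsum, hlamj, sub_zero]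
    have hpex : ∃ p ∈ Finset.univ.erase j, lam p ≠ 0 := by
      apply Finset.exists_ne_zero_of_sum_ne_zero
      rw [hsum']; norm_num
    obtain ⟨p, hp, hpne⟩ := hpex
    have hpj : p ≠ j := Finset.ne_of_mem_erase hp
    refine ⟨p, hpj, ?_⟩
    rw [hfw p, hcne p hpj]
    exact hpne
  refine ⟨⟨j, f, hnonneg, hex⟩, ?_⟩
  intro hP
  have hf0 : f ≠ 0 := by
    intro h0
    have h1 := hfw j
    rw [h0] at h1
    simp [hcj] at h1
  obtain ⟨i, i', hne, hi, hi'⟩ := (hP f hf0).2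
  have hij : i = j := by
    by_contra h
    exact absurd hi (not_lt.2 (hnonneg i h))
  have hij' : i' = j := by
    by_contra h
    exact absurd hi' (not_lt.2 (hnonneg i' h))
  exact hne (hij.trans hij'.symm)
end
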